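/- arXiv:2510.17337 — 9 statements merged into one kernel-verified Lean document; each statement's English description precedes it below -/
import Mathlib

section
/- If a C³₃(v,k,λ)-cube exists with λ·v·(v−1) = k·(k−v), then every 1-dimensional subarray (row) of the cube has sum k/v; in particular v divides k. -/
open Finset

/-- A `C³₃(v,k,λ)`-cube: a `v×v×v` array over `{0,1}` in which every layer
(2-dimensional subarray obtained by fixing one coordinate) contains exactly `k`
ones, and any two distinct parallel layers have scalar product `lam`. -/
def IsCube (v k lam : ℕ) (A : Fin v → Fin v → Fin v → ℕ) : Prop :=
  (∀ x y z, A x y z ≤ 1) ∧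
  (∀ x, ∑ y, ∑ z, A x y z = k) ∧
  (∀ y, ∑ x, ∑ z, A x y z = k) ∧
  (∀ z, ∑ x, ∑ y, A x y z = k) ∧
  (∀ x₁ x₂, x₁ ≠ x₂ → ∑ y, ∑ z, A x₁ y z * A x₂ y z = lam) ∧
  (∀ y₁ y₂, y₁ ≠ y₂ → ∑ x, ∑ z, A x y₁ z * A x y₂ z = lam) ∧
  (∀ z₁ z₂, z₁ ≠ z₂ → ∑ x, ∑ y, A x y z₁ * A x y z₂ = lam)

/-- Pull the innermost of three sums to the outside. -/
lemma swap3 {α : Type*} [Fintype α] (t : α → α → α → ℤ) :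
    ∑ y : α, ∑ z : α, ∑ x : α, t x y z = ∑ x : α, ∑ y : α, ∑ z : α, t x y z := by
  calc ∑ y : α, ∑ z : α, ∑ x : α, t x y z
      = ∑ y : α, ∑ x : α, ∑ z : α, t x y z :=
        Finset.sum_congr rfl fun y _ => Finset.sum_comm
    _ = ∑ x : α, ∑ y : α, ∑ z : α, t x y z := Finset.sum_comm

/-- Cauchy–Schwarz equality case: if `n·∑f² = (∑f)²` then `f` is constant. -/
lemma const_of_eq (ι : Type*) [Fintype ι] (f : ι → ℤ)
    (h : (Fintype.card ι : ℤ) * ∑ i, (f i)^2 = (∑ i, f i)^2) :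
    ∀ i j : ι, f i = f j := by
  have h0 : ∑ i : ι, ∑ j : ι, (f i - f j)^2 = 0 := by
    have inner : ∀ i : ι, ∑ j : ι, (f i - f j)^2
        = (Fintype.card ι : ℤ) * (f i)^2 - 2 * f i * (∑ j : ι, f j)
          + ∑ j : ι, (f j)^2 := by
      intro i
      have e : ∀ j : ι, (f i - f j)^2 = (f i)^2 - 2 * f i * f j + (f j)^2 :=
        fun j => by ring
      rw [Finset.sum_congr rfl fun j _ => e j, Finset.sum_add_distrib,
        Finset.sum_sub_distrib, Finset.sum_const, Finset.card_univ, nsmul_eq_mul]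
      have e2 : ∑ j : ι, 2 * f i * f j = 2 * f i * ∑ j : ι, f j :=
        (Finset.mul_sum _ _ _).symm
      rw [e2]
    rw [Finset.sum_congr rfl fun i _ => inner i, Finset.sum_add_distrib,
      Finset.sum_sub_distrib, ← Finset.mul_sum, Finset.sum_const,
      Finset.card_univ, nsmul_eq_mul]
    have e3 : ∑ i : ι, 2 * f i * (∑ j : ι, f j)
        = 2 * ((∑ j : ι, f j) * (∑ j : ι, f j)) := by
      rw [← Finset.sum_mul, ← Finset.mul_sum]
      ring
    rw [e3]
    linear_combination 2 * h
  intro i j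
  have hnn : ∀ i ∈ (univ : Finset ι), (0:ℤ) ≤ ∑ j : ι, (f i - f j)^2 :=
    fun i _ => Finset.sum_nonneg fun j _ => sq_nonneg _
  have h1 := (Finset.sum_eq_zero_iff_of_nonneg hnn).1 h0 i (mem_univ i)
  have h2 := (Finset.sum_eq_zero_iff_of_nonneg
    (fun j _ => sq_nonneg (f i - f j))).1 h1 j (mem_univ j)
  have h3 : f i - f j = 0 := sq_eq_zero_iff.1 h2
  linarith

/-- Main counting lemma in one fixed direction. -/
lemma key (v k lam : ℕ) (hv : 0 < v) (B : Fin v → Fin v → Fin v → ℕ)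
    (h01 : ∀ x y z, B x y z ≤ 1)
    (hlayer : ∀ x, ∑ y, ∑ z, B x y z = k)
    (hsc : ∀ x₁ x₂, x₁ ≠ x₂ → ∑ y, ∑ z, B x₁ y z * B x₂ y z = lam)
    (heq : (lam : ℤ) * v * (v - 1) = (k : ℤ) * ((k : ℤ) - v)) :
    ∀ y z, (∑ x, B x y z) * v = k := by
  set f : Fin v × Fin v → ℤ := fun p => ∑ x, (B x p.1 p.2 : ℤ) with hf
  have hlayerZ : ∀ x : Fin v, ∑ y : Fin v, ∑ z : Fin v, (B x y z : ℤ) = (k : ℤ) := by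
    intro x
    exact_mod_cast congrArg (Nat.cast : ℕ → ℤ) (hlayer x)
  -- total sum
  have hsum : ∑ p : Fin v × Fin v, f p = (v : ℤ) * k := by
    rw [Fintype.sum_prod_type]
    calc ∑ y : Fin v, ∑ z : Fin v, f (y, z)
        = ∑ x : Fin v, ∑ y : Fin v, ∑ z : Fin v, (B x y z : ℤ) :=
          swap3 (fun x y z => (B x y z : ℤ))
      _ = ∑ _x : Fin v, (k : ℤ) := Finset.sum_congr rfl fun x _ => hlayerZ x
      _ = (v : ℤ) * k := by
          rw [Finset.sum_const, Finset.card_univ, Fintype.card_fin, nsmul_eq_mul]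
  -- sum of squares
  have hsq : ∑ p : Fin v × Fin v, (f p)^2 = (k : ℤ)^2 := by
    have step1 : ∀ (y z : Fin v), (f (y, z))^2
        = ∑ x₁ : Fin v, ∑ x₂ : Fin v, (B x₁ y z : ℤ) * (B x₂ y z : ℤ) := by
      intro y z
      rw [sq]
      exact Finset.sum_mul_sum _ _ _ _
    have hswap : ∑ y : Fin v, ∑ z : Fin v, ∑ x₁ : Fin v, ∑ x₂ : Fin v,
          (B x₁ y z : ℤ) * (B x₂ y z : ℤ)
        = ∑ x₁ : Fin v, ∑ x₂ : Fin v, ∑ y : Fin v, ∑ z : Fin v,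
          (B x₁ y z : ℤ) * (B x₂ y z : ℤ) := by
      calc ∑ y : Fin v, ∑ z : Fin v, ∑ x₁ : Fin v, ∑ x₂ : Fin v,
            (B x₁ y z : ℤ) * (B x₂ y z : ℤ)
          = ∑ x₁ : Fin v, ∑ y : Fin v, ∑ z : Fin v, ∑ x₂ : Fin v,
            (B x₁ y z : ℤ) * (B x₂ y z : ℤ) :=
            swap3 (fun x₁ y z => ∑ x₂ : Fin v, (B x₁ y z : ℤ) * (B x₂ y z : ℤ))
        _ = ∑ x₁ : Fin v, ∑ x₂ : Fin v, ∑ y : Fin v, ∑ z : Fin v,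
            (B x₁ y z : ℤ) * (B x₂ y z : ℤ) :=
            Finset.sum_congr rfl fun x₁ _ =>
              swap3 (fun x₂ y z => (B x₁ y z : ℤ) * (B x₂ y z : ℤ))
    have hdiag : ∀ x : Fin v, ∑ y : Fin v, ∑ z : Fin v,
        (B x y z : ℤ) * (B x y z : ℤ) = (k : ℤ) := by
      intro x
      have hself : ∀ y z : Fin v, (B x y z : ℤ) * (B x y z : ℤ) = (B x y z : ℤ) := by
        intro y z
        rcases Nat.le_one_iff_eq_zero_or_eq_one.1 (h01 x y z) with h | h <;> simp [h]
      calc ∑ y : Fin v, ∑ z : Fin v, (B x y z : ℤ) * (B x y z : ℤ)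
          = ∑ y : Fin v, ∑ z : Fin v, (B x y z : ℤ) :=
            Finset.sum_congr rfl fun y _ => Finset.sum_congr rfl fun z _ => hself y z
        _ = (k : ℤ) := hlayerZ x
    have hoff : ∀ x₁ x₂ : Fin v, x₁ ≠ x₂ → ∑ y : Fin v, ∑ z : Fin v,
        (B x₁ y z : ℤ) * (B x₂ y z : ℤ) = (lam : ℤ) := by
      intro x₁ x₂ hne
      have h' : ((∑ y, ∑ z, B x₁ y z * B x₂ y z : ℕ) : ℤ) = (lam : ℤ) :=
        congrArg (Nat.cast : ℕ → ℤ) (hsc x₁ x₂ hne)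
      push_cast at h'
      exact h'
    have hinner : ∀ x₁ : Fin v, ∑ x₂ : Fin v, ∑ y : Fin v, ∑ z : Fin v,
        (B x₁ y z : ℤ) * (B x₂ y z : ℤ) = (k : ℤ) + ((v : ℤ) - 1) * lam := by
      intro x₁
      rw [← Finset.add_sum_erase _ _ (mem_univ x₁), hdiag x₁]
      congr 1
      have herase : ∀ x₂ ∈ (univ : Finset (Fin v)).erase x₁,
          ∑ y : Fin v, ∑ z : Fin v, (B x₁ y z : ℤ) * (B x₂ y z : ℤ) = (lam : ℤ) :=
        fun x₂ hx₂ => hoff x₁ x₂ (Ne.symm (Finset.mem_erase.1 hx₂).1)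
      rw [Finset.sum_congr rfl herase, Finset.sum_const,
        Finset.card_erase_of_mem (mem_univ x₁), Finset.card_univ, Fintype.card_fin,
        nsmul_eq_mul]
      congr 1
      push_cast [Nat.cast_sub hv]
      ring
    calc ∑ p : Fin v × Fin v, (f p)^2
        = ∑ y : Fin v, ∑ z : Fin v, (f (y, z))^2 := Fintype.sum_prod_type _
      _ = ∑ y : Fin v, ∑ z : Fin v, ∑ x₁ : Fin v, ∑ x₂ : Fin v,
            (B x₁ y z : ℤ) * (B x₂ y z : ℤ) :=
          Finset.sum_congr rfl fun y _ => Finset.sum_congr rfl fun z _ => step1 y z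
      _ = ∑ x₁ : Fin v, ∑ x₂ : Fin v, ∑ y : Fin v, ∑ z : Fin v,
            (B x₁ y z : ℤ) * (B x₂ y z : ℤ) := hswap
      _ = ∑ _x₁ : Fin v, ((k : ℤ) + ((v : ℤ) - 1) * lam) :=
          Finset.sum_congr rfl fun x₁ _ => hinner x₁
      _ = (v : ℤ) * ((k : ℤ) + ((v : ℤ) - 1) * lam) := by
          rw [Finset.sum_const, Finset.card_univ, Fintype.card_fin, nsmul_eq_mul]
      _ = (k : ℤ)^2 := by linear_combination heq
  -- Cauchy-Schwarz equality case
  have hconst := const_of_eq (Fin v × Fin v) f (by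
    rw [hsum, hsq]
    simp only [Fintype.card_prod, Fintype.card_fin]
    push_cast
    ring)
  intro y z
  have hvz : (v : ℤ) ≠ 0 := by exact_mod_cast hv.ne'
  have hval : (v : ℤ) * f (y, z) = (k : ℤ) := by
    have hs : ∑ p : Fin v × Fin v, f p = ((v * v : ℕ) : ℤ) * f (y, z) := by
      rw [Finset.sum_congr rfl fun p _ => hconst p (y, z), Finset.sum_const,
        Finset.card_univ, Fintype.card_prod, Fintype.card_fin, nsmul_eq_mul]
      try push_cast
      try ring
    rw [hsum] at hs
    push_cast at hs
    have h2 : (v : ℤ) * ((v:ℤ) * f (y, z)) = (v:ℤ) * (k:ℤ) := by linarith [hs]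
    exact mul_left_cancel₀ hvz h2
  have hfy : f (y, z) = ((∑ x, B x y z : ℕ) : ℤ) := by
    simp only [hf]
    push_cast
    ring
  have hfin : ((∑ x, B x y z : ℕ) : ℤ) * v = (k : ℤ) := by
    rw [← hfy, mul_comm]
    exact hval
  exact_mod_cast hfin

theorem stmt1 (v k lam : ℕ) (hv : 0 < v) (A : Fin v → Fin v → Fin v → ℕ)
    (hA : IsCube v k lam A)
    (heq : (lam : ℤ) * v * (v - 1) = (k : ℤ) * ((k : ℤ) - v)) :
    v ∣ k ∧
    (∀ x y, ∑ z, A x y z = k / v) ∧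
    (∀ x z, ∑ y, A x y z = k / v) ∧
    (∀ y z, ∑ x, A x y z = k / v) := by
  obtain ⟨h01, hx, hy, hz, sx, sy, sz⟩ := hA
  have kx : ∀ y z, (∑ x, A x y z) * v = k :=
    key v k lam hv A h01 hx sx heq
  have kz : ∀ x y, (∑ z, A x y z) * v = k := fun x y =>
    key v k lam hv (fun a b c => A b c a) (fun a b c => h01 b c a) hz sz heq x y
  have ky : ∀ x z, (∑ y, A x y z) * v = k := fun x z =>
    key v k lam hv (fun a b c => A b a c) (fun a b c => h01 b a c) hy sy heq x z
  have x0 : Fin v := ⟨0, hv⟩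
  have hdvd : v ∣ k := ⟨∑ x, A x x0 x0, by rw [mul_comm]; exact (kx x0 x0).symm⟩
  refine ⟨hdvd, fun x y => ?_, fun x z => ?_, fun y z => ?_⟩
  · rw [← kz x y, Nat.mul_div_cancel _ hv]
  · rw [← ky x z, Nat.mul_div_cancel _ hv]
  · rw [← kx y z, Nat.mul_div_cancel _ hv]
end

section
/- If a C³₃(v,k,λ)-cube exists and v does not divide k, then λ·(v−1) ≥ k·(⌊k/v⌋ + ⌈k/v⌉ − 1) − v·⌊k/v⌋·⌈k/v⌉. -/
open Finset

lemma swap4 {v : ℕ} (f : Fin v → Fin v → Fin v → Fin v → ℕ) :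
    ∑ a, ∑ b, ∑ c, ∑ d, f a b c d = ∑ c, ∑ d, ∑ a, ∑ b, f a b c d := by
  calc ∑ a, ∑ b, ∑ c, ∑ d, f a b c d
      = ∑ a, ∑ c, ∑ d, ∑ b, f a b c d := Finset.sum_congr rfl (fun a _ => by
        rw [Finset.sum_comm]
        exact Finset.sum_congr rfl fun c _ => Finset.sum_comm)
    _ = ∑ c, ∑ d, ∑ a, ∑ b, f a b c d := by
        rw [Finset.sum_comm]
        exact Finset.sum_congr rfl fun c _ => Finset.sum_comm

theorem stmt2 (v k lam : ℕ) (hv : 0 < v) (A : Fin v → Fin v → Fin v → ℕ)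
    (hA : IsCube v k lam A) (hk : ¬ v ∣ k) :
    (lam : ℤ) * (v - 1) ≥
      (k : ℤ) * (((k / v : ℕ) : ℤ) + (((k + v - 1) / v : ℕ) : ℤ) - 1) -
        (v : ℤ) * ((k / v : ℕ) : ℤ) * (((k + v - 1) / v : ℕ) : ℤ) := by
  obtain ⟨h01, hx, hy, hz, hxx, hyy, hzz⟩ := hA
  have hv1 : 1 ≤ v := hv
  set q : ℕ := k / v with hq
  have hceil : (k + v - 1) / v = q + 1 := by
    have hk0 : k ≠ 0 := by rintro rfl; exact hk (dvd_zero v)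
    have h1 : k + v - 1 = (k - 1) + v := by omega
    have h3 := @Nat.succ_div (k - 1) v
    have h2 : (k - 1 + 1) = k := by omega
    rw [h2, if_neg hk] at h3
    rw [h1, Nat.add_div_right _ hv]
    omega
  rw [hceil]
  -- S y z = number of ones in the column over (y,z)
  set S : Fin v → Fin v → ℕ := fun y z => ∑ x, A x y z with hS
  -- total number of ones
  have hS1 : ∑ y, ∑ z, S y z = v * k := by
    calc ∑ y, ∑ z, ∑ x, A x y z
        = ∑ y, ∑ x, ∑ z, A x y z :=
          Finset.sum_congr rfl fun y _ => Finset.sum_comm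
      _ = ∑ x, ∑ y, ∑ z, A x y z := Finset.sum_comm
      _ = ∑ x : Fin v, k := Finset.sum_congr rfl fun x _ => hx x
      _ = v * k := by simp [Finset.sum_const, Finset.card_univ, mul_comm]
  -- sum of squares
  have hsq : ∑ y, ∑ z, (S y z) ^ 2 = v * (k + (v - 1) * lam) := by
    have hmul : ∀ a : ℕ, a ≤ 1 → a * a = a := by
      intro a ha; interval_cases a <;> rfl
    calc ∑ y, ∑ z, (S y z) ^ 2
        = ∑ y, ∑ z, ∑ x₁, ∑ x₂, A x₁ y z * A x₂ y z := by
          refine Finset.sum_congr rfl fun y _ => Finset.sum_congr rfl fun z _ => ?_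
          rw [sq, Finset.sum_mul_sum]
      _ = ∑ x₁, ∑ x₂, ∑ y, ∑ z, A x₁ y z * A x₂ y z :=
          (swap4 fun x₁ x₂ y z => A x₁ y z * A x₂ y z).symm
      _ = ∑ x₁ : Fin v, (k + (v - 1) * lam) := by
          refine Finset.sum_congr rfl fun x₁ _ => ?_
          rw [← Finset.add_sum_erase _ _ (Finset.mem_univ x₁)]
          congr 1
          · calc ∑ y, ∑ z, A x₁ y z * A x₁ y z
                = ∑ y, ∑ z, A x₁ y z :=
                  Finset.sum_congr rfl fun y _ => Finset.sum_congr rfl fun z _ =>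
                    hmul _ (h01 x₁ y z)
              _ = k := hx x₁
          · calc ∑ x₂ ∈ Finset.univ.erase x₁, ∑ y, ∑ z, A x₁ y z * A x₂ y z
                = ∑ x₂ ∈ Finset.univ.erase x₁, lam :=
                  Finset.sum_congr rfl fun x₂ hx₂ =>
                    hxx x₁ x₂ (Finset.ne_of_mem_erase hx₂).symm
              _ = (v - 1) * lam := by
                  rw [Finset.sum_const, Finset.card_erase_of_mem (Finset.mem_univ x₁)]
                  simp [Finset.card_univ, smul_eq_mul]
      _ = v * (k + (v - 1) * lam) := by
          simp [Finset.sum_const, Finset.card_univ, mul_comm]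
  -- pointwise convexity bound
  have hpt : ∀ a : ℕ, 2 * (q : ℤ) * a - q ^ 2 - q ≤ (a : ℤ) ^ 2 - a := by
    intro a
    rcases le_or_gt a q with h | h
    · have : (a : ℤ) ≤ q := by exact_mod_cast h
      nlinarith
    · have : (q : ℤ) + 1 ≤ a := by exact_mod_cast h
      nlinarith
  have hmain : 2 * (q : ℤ) * (v * k) - v ^ 2 * (q ^ 2 + q) ≤
      (v : ℤ) * (k + (v - 1) * lam) - v * k := by
    have hsum : ∑ y : Fin v, ∑ z : Fin v, (2 * (q : ℤ) * (S y z) - q ^ 2 - q) ≤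
        ∑ y : Fin v, ∑ z : Fin v, (((S y z : ℤ)) ^ 2 - (S y z : ℤ)) :=
      Finset.sum_le_sum fun y _ => Finset.sum_le_sum fun z _ => hpt (S y z)
    have e1 : ∑ y : Fin v, ∑ z : Fin v, (2 * (q : ℤ) * (S y z) - q ^ 2 - q) =
        2 * (q : ℤ) * (v * k) - v ^ 2 * (q ^ 2 + q) := by
      have c1 : ((∑ y, ∑ z, S y z : ℕ) : ℤ) = (v : ℤ) * k := by
        rw [hS1]; push_cast; ring
      push_cast at c1
      simp only [Finset.sum_sub_distrib, ← Finset.mul_sum, Finset.sum_const,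
        Finset.card_univ, Fintype.card_fin, smul_eq_mul]
      rw [c1]
      ring
    have e2 : ∑ y : Fin v, ∑ z : Fin v, (((S y z : ℤ)) ^ 2 - (S y z : ℤ)) =
        (v : ℤ) * (k + ((v : ℤ) - 1) * lam) - v * k := by
      have c1 : ((∑ y, ∑ z, S y z : ℕ) : ℤ) = (v : ℤ) * k := by
        rw [hS1]; push_cast; ring
      have c2 : ((∑ y, ∑ z, (S y z) ^ 2 : ℕ) : ℤ) = (v : ℤ) * (k + ((v : ℤ) - 1) * lam) := by
        rw [hsq]; push_cast [Nat.cast_sub hv1]; ring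
      push_cast at c1 c2
      simp only [Finset.sum_sub_distrib]
      rw [c1, c2]
    calc 2 * (q : ℤ) * (v * k) - v ^ 2 * (q ^ 2 + q)
        = ∑ y : Fin v, ∑ z : Fin v, (2 * (q : ℤ) * (S y z) - q ^ 2 - q) := e1.symm
      _ ≤ ∑ y : Fin v, ∑ z : Fin v, (((S y z : ℤ)) ^ 2 - (S y z : ℤ)) := hsum
      _ = (v : ℤ) * (k + ((v : ℤ) - 1) * lam) - v * k := e2
      _ = (v : ℤ) * (k + (v - 1) * lam) - v * k := by norm_num
  have hvpos : (0 : ℤ) < v := by exact_mod_cast hv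
  rw [ge_iff_le]
  apply le_of_mul_le_mul_left _ hvpos
  push_cast
  nlinarith [hmain]
end

section
/- If a C³₃(v,k,λ)-cube exists and k > 1, then λ·(v−1) ≤ k·(k−1) − 1. -/
open Finset

theorem stmt3 (v k lam : ℕ) (hv : 0 < v) (A : Fin v → Fin v → Fin v → ℕ)
    (hA : IsCube v k lam A) (hk : 1 < k) :
    (lam : ℤ) * (v - 1) ≤ (k : ℤ) * ((k : ℤ) - 1) - 1 := by
  classical
  obtain ⟨h01, hx, hy, hz, hxx, hyy, hzz⟩ := hA
  obtain ⟨w, rfl⟩ : ∃ w, v = w + 1 := ⟨v - 1, by omega⟩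
  have key : lam * w + k + 1 ≤ k * k := by
    set x₀ : Fin (w + 1) := ⟨0, hv⟩ with hx₀def
    set B : Fin (w + 1) × Fin (w + 1) → ℕ := fun p => A x₀ p.1 p.2 with hBdef
    set L : Fin (w + 1) × Fin (w + 1) → ℕ := fun p => ∑ x, A x p.1 p.2 with hLdef
    have hB1 : ∀ p, B p ≤ 1 := fun p => h01 _ _ _
    have hBsum : ∑ p, B p = k := by
      rw [Fintype.sum_prod_type]; exact hx x₀
    have hLk : ∀ p, L p ≤ k := by
      intro p
      calc L p ≤ ∑ x, ∑ z', A x p.1 z' :=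
            Finset.sum_le_sum fun x _ =>
              Finset.single_le_sum (fun z' _ => Nat.zero_le _) (Finset.mem_univ p.2)
        _ = k := hy p.1
    -- the scalar product count
    have hS : ∑ p, L p * B p = lam * w + k := by
      have swap : ∑ p, L p * B p = ∑ x, ∑ p : Fin (w+1) × Fin (w+1), A x p.1 p.2 * B p := by
        simp only [hLdef, Finset.sum_mul]
        exact Finset.sum_comm
      rw [swap]
      have hterm : ∀ x : Fin (w + 1), x ≠ x₀ →
          (∑ p : Fin (w+1) × Fin (w+1), A x p.1 p.2 * B p) = lam := by
        intro x hxne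
        rw [Fintype.sum_prod_type]
        exact hxx x x₀ hxne
      have hdiag : (∑ p : Fin (w+1) × Fin (w+1), A x₀ p.1 p.2 * B p) = k := by
        have : ∀ p : Fin (w+1) × Fin (w+1), A x₀ p.1 p.2 * B p = B p := by
          intro p
          have hb : A x₀ p.1 p.2 = B p := rfl
          rcases Nat.le_one_iff_eq_zero_or_eq_one.mp (hB1 p) with h | h <;>
            rw [hb, h] <;> simp
        rw [Finset.sum_congr rfl fun p _ => this p, hBsum]
      rw [← Finset.add_sum_erase Finset.univ _ (Finset.mem_univ x₀), hdiag,
        Finset.sum_congr rfl (fun x hx => hterm x (Finset.mem_erase.mp hx).1),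
        Finset.sum_const, Finset.card_erase_of_mem (Finset.mem_univ x₀), Finset.card_univ]
      simp [Fintype.card_fin, mul_comm]
      ring
    have hle : ∑ p, L p * B p ≤ k * k := by
      calc ∑ p, L p * B p ≤ ∑ p, k * B p :=
            Finset.sum_le_sum fun p _ => Nat.mul_le_mul_right _ (hLk p)
        _ = k * k := by rw [← Finset.mul_sum, hBsum]
    rcases lt_or_eq_of_le hle with hlt | heq
    · omega
    -- equality case: every support point has full line, forcing lam = 0
    · have hpt : ∀ p, L p * B p = k * B p := by
        have h2 : ∑ p, L p * B p = ∑ p, k * B p := by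
          rw [heq, ← Finset.mul_sum, hBsum]
        intro p
        exact (Finset.sum_eq_sum_iff_of_le
          (fun q _ => Nat.mul_le_mul_right _ (hLk q))).mp h2 p (Finset.mem_univ p)
      have hLfull : ∀ p, B p = 1 → L p = k := by
        intro p hp
        have := hpt p
        rwa [hp, mul_one, mul_one] at this
      -- concentration lemmas
      have concY : ∀ p : Fin (w+1) × Fin (w+1), L p = k →
          ∀ x z, z ≠ p.2 → A x p.1 z = 0 := by
        intro p hLp x z hz
        have hsum : ∑ x', A x' p.1 p.2 = ∑ x', ∑ z', A x' p.1 z' := by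
          rw [hy p.1]; exact hLp
        have hptw : ∀ x' ∈ Finset.univ, A x' p.1 p.2 = ∑ z', A x' p.1 z' :=
          (Finset.sum_eq_sum_iff_of_le (fun x' _ =>
            Finset.single_le_sum (f := fun z' => A x' p.1 z')
              (fun z' _ => Nat.zero_le _) (Finset.mem_univ p.2))).mp hsum
        have hx' := hptw x (Finset.mem_univ x)
        have herase : ∑ z' ∈ Finset.univ.erase p.2, A x p.1 z' = 0 := by
          have hadd : A x p.1 p.2 + ∑ z' ∈ Finset.univ.erase p.2, A x p.1 z'
              = ∑ z', A x p.1 z' :=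
            Finset.add_sum_erase Finset.univ (fun z' => A x p.1 z') (Finset.mem_univ p.2)
          omega
        exact Finset.sum_eq_zero_iff.mp herase z (Finset.mem_erase.mpr ⟨hz, Finset.mem_univ z⟩)
      have concZ : ∀ p : Fin (w+1) × Fin (w+1), L p = k →
          ∀ x y, y ≠ p.1 → A x y p.2 = 0 := by
        intro p hLp x y hyne
        have hsum : ∑ x', A x' p.1 p.2 = ∑ x', ∑ y', A x' y' p.2 := by
          rw [hz p.2]; exact hLp
        have hptw : ∀ x' ∈ Finset.univ, A x' p.1 p.2 = ∑ y', A x' y' p.2 :=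
          (Finset.sum_eq_sum_iff_of_le (fun x' _ =>
            Finset.single_le_sum (f := fun y' => A x' y' p.2)
              (fun y' _ => Nat.zero_le _) (Finset.mem_univ p.1))).mp hsum
        have hx' := hptw x (Finset.mem_univ x)
        have herase : ∑ y' ∈ Finset.univ.erase p.1, A x y' p.2 = 0 := by
          have hadd : A x p.1 p.2 + ∑ y' ∈ Finset.univ.erase p.1, A x y' p.2
              = ∑ y', A x y' p.2 :=
            Finset.add_sum_erase Finset.univ (fun y' => A x y' p.2) (Finset.mem_univ p.1)
          omega
        exact Finset.sum_eq_zero_iff.mp herase y (Finset.mem_erase.mpr ⟨hyne, Finset.mem_univ y⟩)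
      -- two distinct support points
      set s : Finset (Fin (w+1) × Fin (w+1)) := Finset.univ.filter (fun p => B p = 1) with hsdef
      have hcard : s.card = k := by
        have h0 : ∑ p ∈ Finset.univ.filter (fun p => ¬ B p = 1), B p = 0 :=
          Finset.sum_eq_zero fun p hp => by
            have := hB1 p
            have := (Finset.mem_filter.mp hp).2
            omega
        have h1 : ∑ p ∈ s, B p = s.card := by
          rw [Finset.sum_congr rfl (fun p hp => (Finset.mem_filter.mp hp).2)]
          simp
          rfl
        have htot : ∑ p ∈ s, B p + ∑ p ∈ Finset.univ.filter (fun p => ¬ B p = 1), B p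
            = ∑ p, B p :=
          Finset.sum_filter_add_sum_filter_not Finset.univ (fun p => B p = 1) B
        omega
      obtain ⟨p, hp, q, hq, hpq⟩ := Finset.one_lt_card.mp (by omega : 1 < s.card)
      have hBp : B p = 1 := (Finset.mem_filter.mp hp).2
      have hBq : B q = 1 := (Finset.mem_filter.mp hq).2
      have hLp := hLfull p hBp
      have hLq := hLfull q hBq
      have hy12 : q.1 ≠ p.1 := by
        intro h
        have hz12 : q.2 ≠ p.2 := by
          intro h2; exact hpq (Prod.ext h h2).symm
        have := concY p hLp x₀ q.2 hz12
        rw [← h] at this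
        exact absurd hBq (by rw [hBdef]; simp [this])
      have hlam0 : lam = 0 := by
        have := hyy p.1 q.1 (fun h => hy12 h.symm)
        rw [← this]
        apply Finset.sum_eq_zero
        intro x _
        apply Finset.sum_eq_zero
        intro z _
        by_cases hzz1 : z = p.2
        · rw [hzz1, concZ p hLp x q.1 hy12, mul_zero]
        · rw [concY p hLp x z hzz1, zero_mul]
      subst hlam0
      nlinarith
  have key' : (lam : ℤ) * w + k + 1 ≤ k * k := by exact_mod_cast key
  push_cast
  nlinarith [key']
end

section
/- If a C³₃(v,k,λ)-cube exists with λ = k, then k = 0 or k = v². -/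
open Finset

lemma eq_of_dot {n k : ℕ} (a b : Fin n → Fin n → ℕ)
    (h2 : ∀ i j, b i j ≤ 1)
    (ha : ∑ i, ∑ j, a i j = k) (hd : ∑ i, ∑ j, a i j * b i j = k) :
    ∀ i j, a i j * b i j = a i j := by
  have hle : ∀ p ∈ (univ : Finset (Fin n × Fin n)),
      a p.1 p.2 * b p.1 p.2 ≤ a p.1 p.2 := by
    intro p _
    calc a p.1 p.2 * b p.1 p.2 ≤ a p.1 p.2 * 1 :=
          Nat.mul_le_mul_left _ (h2 _ _)
      _ = a p.1 p.2 := Nat.mul_one _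
  have hsum : ∑ p : Fin n × Fin n, a p.1 p.2 * b p.1 p.2
      = ∑ p : Fin n × Fin n, a p.1 p.2 := by
    rw [Fintype.sum_prod_type, Fintype.sum_prod_type, ha, hd]
  have := (Finset.sum_eq_sum_iff_of_le hle).mp hsum
  intro i j
  exact this (i, j) (mem_univ _)

theorem stmt4 (v k : ℕ) (hv : 0 < v) (A : Fin v → Fin v → Fin v → ℕ)
    (hA : IsCube v k k A) :
    k = 0 ∨ k = v ^ 2 := by
  obtain ⟨h01, hx, hy, hz, hxx, hyy, hzz⟩ := hA
  -- layers equal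
  have keyx : ∀ x₁ x₂ y z, A x₁ y z = A x₂ y z := by
    intro x₁ x₂ y z
    rcases eq_or_ne x₁ x₂ with h | h
    · rw [h]
    · have e1 := eq_of_dot (fun y z => A x₁ y z) (fun y z => A x₂ y z)
        (fun i j => h01 _ _ _) (hx x₁) (hxx x₁ x₂ h) y z
      have e2 := eq_of_dot (fun y z => A x₂ y z) (fun y z => A x₁ y z)
        (fun i j => h01 _ _ _) (hx x₂)
        (by rw [← hxx x₁ x₂ h]; simp [Nat.mul_comm]) y z
      exact e1.symm.trans (by rw [Nat.mul_comm]; exact e2)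
  have keyy : ∀ x y₁ y₂ z, A x y₁ z = A x y₂ z := by
    intro x y₁ y₂ z
    rcases eq_or_ne y₁ y₂ with h | h
    · rw [h]
    · have e1 := eq_of_dot (fun x z => A x y₁ z) (fun x z => A x y₂ z)
        (fun i j => h01 _ _ _) (hy y₁) (hyy y₁ y₂ h) x z
      have e2 := eq_of_dot (fun x z => A x y₂ z) (fun x z => A x y₁ z)
        (fun i j => h01 _ _ _) (hy y₂)
        (by rw [← hyy y₁ y₂ h]; simp [Nat.mul_comm]) x z
      exact e1.symm.trans (by rw [Nat.mul_comm]; exact e2)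
  have keyz : ∀ x y z₁ z₂, A x y z₁ = A x y z₂ := by
    intro x y z₁ z₂
    rcases eq_or_ne z₁ z₂ with h | h
    · rw [h]
    · have e1 := eq_of_dot (fun x y => A x y z₁) (fun x y => A x y z₂)
        (fun i j => h01 _ _ _) (hz z₁) (hzz z₁ z₂ h) x y
      have e2 := eq_of_dot (fun x y => A x y z₂) (fun x y => A x y z₁)
        (fun i j => h01 _ _ _) (hz z₂)
        (by rw [← hzz z₁ z₂ h]; simp [Nat.mul_comm]) x y
      exact e1.symm.trans (by rw [Nat.mul_comm]; exact e2)
  set x0 : Fin v := ⟨0, hv⟩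
  set c := A x0 x0 x0 with hc
  have hconst : ∀ x y z, A x y z = c := by
    intro x y z
    rw [keyx x x0 y z, keyy x0 y x0 z, keyz x0 x0 z x0]
  have hk : k = v ^ 2 * c := by
    rw [← hx x0]
    simp only [hconst]
    simp [sq, Nat.mul_assoc]
  have hc1 : c ≤ 1 := h01 _ _ _
  interval_cases c
  · left; omega
  · right; omega
end

section
/- Let G be a finite group of order v and D ⊆ G² a (v,k,λ) difference set of propriety 3. Then the development dev D = {(x·g, y·g, g) : (x,y) ∈ D, g ∈ G} is the support of a C³₃(v,k,λ)-cube, i.e., the array A(a,b,c) = [(a,b,c) ∈ dev D] satisfies: every layer contains exactly k ones and any two distinct parallel layers have scalar product λ. -/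
open Finset

variable {G : Type*} [Group G] [Fintype G] [DecidableEq G]

/-- A (v,k,lam) difference set of propriety 3 in a group G of order v:
a k-subset D of G x G such that for every nonidentity g, condition (1) on left
differences of both coordinates, and conditions (2),(3) on right differences of
one coordinate with the other coordinate equal, each have exactly lam solutions. -/
def IsPropDS3 (G : Type*) [Group G] [Fintype G] [DecidableEq G]
    (v k lam : ℕ) (D : Finset (G × G)) : Prop :=
  Fintype.card G = v ∧ D.card = k ∧
  ∀ g : G, g ≠ 1 →
    (((D ×ˢ D).filter fun p => p.1.1⁻¹ * p.2.1 = g ∧ p.1.2⁻¹ * p.2.2 = g).card = lam ∧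
     ((D ×ˢ D).filter fun p => p.1.1 * p.2.1⁻¹ = g ∧ p.1.2 = p.2.2).card = lam ∧
     ((D ×ˢ D).filter fun p => p.1.1 = p.2.1 ∧ p.1.2 * p.2.2⁻¹ = g).card = lam)

/-- The development of D: all triples (x*g, y*g, g) for (x,y) in D, g in G. -/
def dev (D : Finset (G × G)) : Finset (G × G × G) :=
  (D ×ˢ (Finset.univ : Finset G)).image fun p => (p.1.1 * p.2, p.1.2 * p.2, p.2)

lemma mem_dev {D : Finset (G × G)} {a b c : G} :
    (a, b, c) ∈ dev D ↔ (a * c⁻¹, b * c⁻¹) ∈ D := by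
  constructor
  · intro h
    simp only [dev, Finset.mem_image, Finset.mem_product, Finset.mem_univ, and_true,
      Prod.exists, Prod.mk.injEq] at h
    obtain ⟨x, y, g, hxy, h1, h2, h3⟩ := h
    subst h3; subst h1; subst h2
    simpa using hxy
  · intro h
    simp only [dev, Finset.mem_image, Finset.mem_product, Finset.mem_univ, and_true,
      Prod.exists, Prod.mk.injEq]
    exact ⟨a * c⁻¹, b * c⁻¹, c, h, by group, by group, rfl⟩

lemma sum_sum_ite {P : G → G → Prop} [DecidablePred fun p : G × G => P p.1 p.2]
    [∀ x y, Decidable (P x y)] :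
    ∑ x : G, ∑ y : G, (if P x y then 1 else 0) =
      ((Finset.univ ×ˢ Finset.univ : Finset (G × G)).filter fun p => P p.1 p.2).card := by
  rw [Finset.card_filter, Finset.sum_product]

theorem stmt9 (v k lam : ℕ) (D : Finset (G × G))
    (hD : IsPropDS3 G v k lam D) :
    let A : G → G → G → ℕ := fun a b c => if (a, b, c) ∈ dev D then 1 else 0
    (∀ a : G, ∑ b : G, ∑ c : G, A a b c = k) ∧
    (∀ b : G, ∑ a : G, ∑ c : G, A a b c = k) ∧
    (∀ c : G, ∑ a : G, ∑ b : G, A a b c = k) ∧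
    (∀ a₁ a₂ : G, a₁ ≠ a₂ → ∑ b : G, ∑ c : G, A a₁ b c * A a₂ b c = lam) ∧
    (∀ b₁ b₂ : G, b₁ ≠ b₂ → ∑ a : G, ∑ c : G, A a b₁ c * A a b₂ c = lam) ∧
    (∀ c₁ c₂ : G, c₁ ≠ c₂ → ∑ a : G, ∑ b : G, A a b c₁ * A a b c₂ = lam) := by
  intro A
  obtain ⟨hv, hk, hlam⟩ := hD
  have hA : ∀ a b c : G, A a b c = if (a * c⁻¹, b * c⁻¹) ∈ D then 1 else 0 := by
    intro a b c; simp only [A, mem_dev]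
  have hmul : ∀ (p q : Prop) [Decidable p] [Decidable q],
      (if p then (1:ℕ) else 0) * (if q then 1 else 0) = if p ∧ q then 1 else 0 := by
    intro p q _ _; split_ifs <;> simp_all
  refine ⟨?_, ?_, ?_, ?_, ?_, ?_⟩
  · intro a
    simp only [hA]
    rw [sum_sum_ite]
    rw [show ((Finset.univ ×ˢ Finset.univ : Finset (G × G)).filter
        fun p => (a * p.2⁻¹, p.1 * p.2⁻¹) ∈ D).card = D.card from ?_]
    · exact hk
    · refine Finset.card_nbij' (fun p => (a * p.2⁻¹, p.1 * p.2⁻¹))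
        (fun q => (q.2 * q.1⁻¹ * a, q.1⁻¹ * a)) ?_ ?_ ?_ ?_
      · intro p hp; simpa using (Finset.mem_filter.mp hp).2
      · intro q hq
        simp only [Finset.mem_coe, Finset.mem_filter, Finset.mem_product, Finset.mem_univ, true_and, and_true] at hq ⊢
        convert hq using 2 <;> group
      · intro p hp; ext <;> simp <;> group
      · intro q hq; ext <;> simp <;> group
  · intro b
    simp only [hA]
    rw [sum_sum_ite]
    rw [show ((Finset.univ ×ˢ Finset.univ : Finset (G × G)).filter
        fun p => (p.1 * p.2⁻¹, b * p.2⁻¹) ∈ D).card = D.card from ?_]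
    · exact hk
    · refine Finset.card_nbij' (fun p => (p.1 * p.2⁻¹, b * p.2⁻¹))
        (fun q => (q.1 * q.2⁻¹ * b, q.2⁻¹ * b)) ?_ ?_ ?_ ?_
      · intro p hp; simpa using (Finset.mem_filter.mp hp).2
      · intro q hq
        simp only [Finset.mem_coe, Finset.mem_filter, Finset.mem_product, Finset.mem_univ, true_and, and_true] at hq ⊢
        convert hq using 2 <;> group
      · intro p hp; ext <;> simp <;> group
      · intro q hq; ext <;> simp <;> group
  · intro c
    simp only [hA]
    rw [sum_sum_ite]
    rw [show ((Finset.univ ×ˢ Finset.univ : Finset (G × G)).filter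
        fun p => (p.1 * c⁻¹, p.2 * c⁻¹) ∈ D).card = D.card from ?_]
    · exact hk
    · refine Finset.card_nbij' (fun p => (p.1 * c⁻¹, p.2 * c⁻¹))
        (fun q => (q.1 * c, q.2 * c)) ?_ ?_ ?_ ?_
      · intro p hp; simpa using (Finset.mem_filter.mp hp).2
      · intro q hq
        simp only [Finset.mem_coe, Finset.mem_filter, Finset.mem_product, Finset.mem_univ, true_and, and_true] at hq ⊢
        convert hq using 2 <;> group
      · intro p hp; ext <;> simp <;> group
      · intro q hq; ext <;> simp <;> group
  · intro a₁ a₂ hne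
    have hg : a₁ * a₂⁻¹ ≠ 1 := by
      intro h; apply hne; simp_all [mul_inv_eq_one]
    obtain ⟨_, h2, _⟩ := hlam (a₁ * a₂⁻¹) hg
    simp only [hA, hmul]
    rw [sum_sum_ite]
    rw [show ((Finset.univ ×ˢ Finset.univ : Finset (G × G)).filter
        fun p => (a₁ * p.2⁻¹, p.1 * p.2⁻¹) ∈ D ∧ (a₂ * p.2⁻¹, p.1 * p.2⁻¹) ∈ D).card
        = ((D ×ˢ D).filter fun p =>
            p.1.1 * p.2.1⁻¹ = a₁ * a₂⁻¹ ∧ p.1.2 = p.2.2).card from ?_]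
    · exact h2
    · refine Finset.card_nbij'
        (fun p => ((a₁ * p.2⁻¹, p.1 * p.2⁻¹), (a₂ * p.2⁻¹, p.1 * p.2⁻¹)))
        (fun q => (q.1.2 * q.1.1⁻¹ * a₁, q.1.1⁻¹ * a₁)) ?_ ?_ ?_ ?_
      · rintro ⟨b, c⟩ hp
        obtain ⟨-, hp1, hp2⟩ := Finset.mem_filter.mp hp
        exact Finset.mem_filter.mpr ⟨Finset.mem_product.mpr ⟨hp1, hp2⟩, by group, rfl⟩
      · rintro ⟨⟨x, y⟩, x', y'⟩ hq
        obtain ⟨hmem, hxx, hyy⟩ := Finset.mem_filter.mp hq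
        obtain ⟨hd1, hd2⟩ := Finset.mem_product.mp hmem
        have hx' : x' = (a₁ * a₂⁻¹)⁻¹ * x := by rw [← hxx]; group
        dsimp only at hxx hyy
        subst hyy
        refine Finset.mem_filter.mpr ⟨Finset.mem_product.mpr ⟨Finset.mem_univ _,
          Finset.mem_univ _⟩, ?_, ?_⟩
        · convert hd1 using 2 <;> group
        · rw [hx'] at hd2; convert hd2 using 2 <;> group
      · rintro ⟨b, c⟩ hp
        simp only [Prod.mk.injEq]; constructor <;> group
      · rintro ⟨⟨x, y⟩, x', y'⟩ hq
        obtain ⟨hmem, hxx, hyy⟩ := Finset.mem_filter.mp hq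
        have hx' : x' = (a₁ * a₂⁻¹)⁻¹ * x := by rw [← hxx]; group
        dsimp only at hxx hyy
        subst hyy
        simp only [Prod.mk.injEq]
        refine ⟨⟨by group, by group⟩, ?_, by group⟩
        rw [hx']; group
  · intro b₁ b₂ hne
    have hg : b₁ * b₂⁻¹ ≠ 1 := by
      intro h; apply hne; simp_all [mul_inv_eq_one]
    obtain ⟨_, _, h3⟩ := hlam (b₁ * b₂⁻¹) hg
    simp only [hA, hmul]
    rw [sum_sum_ite]
    rw [show ((Finset.univ ×ˢ Finset.univ : Finset (G × G)).filter
        fun p => (p.1 * p.2⁻¹, b₁ * p.2⁻¹) ∈ D ∧ (p.1 * p.2⁻¹, b₂ * p.2⁻¹) ∈ D).card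
        = ((D ×ˢ D).filter fun p =>
            p.1.1 = p.2.1 ∧ p.1.2 * p.2.2⁻¹ = b₁ * b₂⁻¹).card from ?_]
    · exact h3
    · refine Finset.card_nbij'
        (fun p => ((p.1 * p.2⁻¹, b₁ * p.2⁻¹), (p.1 * p.2⁻¹, b₂ * p.2⁻¹)))
        (fun q => (q.1.1 * q.1.2⁻¹ * b₁, q.1.2⁻¹ * b₁)) ?_ ?_ ?_ ?_
      · rintro ⟨a, c⟩ hp
        obtain ⟨-, hp1, hp2⟩ := Finset.mem_filter.mp hp
        exact Finset.mem_filter.mpr ⟨Finset.mem_product.mpr ⟨hp1, hp2⟩, rfl, by group⟩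
      · rintro ⟨⟨x, y⟩, x', y'⟩ hq
        obtain ⟨hmem, hxx, hyy⟩ := Finset.mem_filter.mp hq
        obtain ⟨hd1, hd2⟩ := Finset.mem_product.mp hmem
        have hy' : y' = (b₁ * b₂⁻¹)⁻¹ * y := by rw [← hyy]; group
        dsimp only at hxx hyy
        subst hxx
        refine Finset.mem_filter.mpr ⟨Finset.mem_product.mpr ⟨Finset.mem_univ _,
          Finset.mem_univ _⟩, ?_, ?_⟩
        · convert hd1 using 2 <;> group
        · rw [hy'] at hd2; convert hd2 using 2 <;> group
      · rintro ⟨a, c⟩ hp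
        simp only [Prod.mk.injEq]; constructor <;> group
      · rintro ⟨⟨x, y⟩, x', y'⟩ hq
        obtain ⟨hmem, hxx, hyy⟩ := Finset.mem_filter.mp hq
        have hy' : y' = (b₁ * b₂⁻¹)⁻¹ * y := by rw [← hyy]; group
        dsimp only at hxx hyy
        subst hxx
        simp only [Prod.mk.injEq]
        refine ⟨⟨by group, by group⟩, by group, ?_⟩
        rw [hy']; group
  · intro c₁ c₂ hne
    have hg : c₁ * c₂⁻¹ ≠ 1 := by
      intro h; apply hne; simp_all [mul_inv_eq_one]
    obtain ⟨h1, _, _⟩ := hlam (c₁ * c₂⁻¹) hg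
    simp only [hA, hmul]
    rw [sum_sum_ite]
    rw [show ((Finset.univ ×ˢ Finset.univ : Finset (G × G)).filter
        fun p => (p.1 * c₁⁻¹, p.2 * c₁⁻¹) ∈ D ∧ (p.1 * c₂⁻¹, p.2 * c₂⁻¹) ∈ D).card
        = ((D ×ˢ D).filter fun p =>
            p.1.1⁻¹ * p.2.1 = c₁ * c₂⁻¹ ∧ p.1.2⁻¹ * p.2.2 = c₁ * c₂⁻¹).card from ?_]
    · exact h1
    · refine Finset.card_nbij'
        (fun p => ((p.1 * c₁⁻¹, p.2 * c₁⁻¹), (p.1 * c₂⁻¹, p.2 * c₂⁻¹)))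
        (fun q => (q.1.1 * c₁, q.1.2 * c₁)) ?_ ?_ ?_ ?_
      · rintro ⟨a, b⟩ hp
        obtain ⟨-, hp1, hp2⟩ := Finset.mem_filter.mp hp
        exact Finset.mem_filter.mpr ⟨Finset.mem_product.mpr ⟨hp1, hp2⟩, by group, by group⟩
      · rintro ⟨⟨x, y⟩, x', y'⟩ hq
        obtain ⟨hmem, hxx, hyy⟩ := Finset.mem_filter.mp hq
        obtain ⟨hd1, hd2⟩ := Finset.mem_product.mp hmem
        have hx' : x' = x * (c₁ * c₂⁻¹) := by rw [← hxx]; group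
        have hy' : y' = y * (c₁ * c₂⁻¹) := by rw [← hyy]; group
        refine Finset.mem_filter.mpr ⟨Finset.mem_product.mpr ⟨Finset.mem_univ _,
          Finset.mem_univ _⟩, ?_, ?_⟩
        · convert hd1 using 2 <;> group
        · rw [hx', hy'] at hd2; convert hd2 using 2 <;> group
      · rintro ⟨a, b⟩ hp
        simp only [Prod.mk.injEq]; constructor <;> group
      · rintro ⟨⟨x, y⟩, x', y'⟩ hq
        obtain ⟨hmem, hxx, hyy⟩ := Finset.mem_filter.mp hq
        have hx' : x' = x * (c₁ * c₂⁻¹) := by rw [← hxx]; group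
        have hy' : y' = y * (c₁ * c₂⁻¹) := by rw [← hyy]; group
        simp only [Prod.mk.injEq]
        refine ⟨⟨by group, by group⟩, ?_, ?_⟩
        · rw [hx']; group
        · rw [hy']; group
end

section
/- Let D ⊆ G² be a difference set of propriety 3 and φ an automorphism of G whose only fixed point is the identity. If φ is a multiplier of D, i.e., φ(D) = (a,b)·D for some (a,b) ∈ G², then there exists (g,h) ∈ G² such that φ((g,h)·D) = (g,h)·D. -/
open Finset

private lemma surj_aux {G : Type*} [Group G] [Fintype G] (φ : G ≃* G)
    (hfix : ∀ x : G, φ x = x → x = 1) (a : G) : ∃ g : G, (φ g)⁻¹ * g = a := by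
  have hinj : Function.Injective (fun g : G => (φ g)⁻¹ * g) := by
    intro x y hxy
    simp only at hxy
    have e : x * y⁻¹ = φ x * (φ y)⁻¹ := by
      have h2 := congrArg (fun z => φ x * z * y⁻¹) hxy
      simpa [mul_assoc] using h2
    have key : φ (x * y⁻¹) = x * y⁻¹ := by
      rw [map_mul, map_inv, ← e]
    exact mul_inv_eq_one.mp (hfix _ key)
  exact (Finite.injective_iff_surjective.mp hinj) a

theorem stmt11 {G : Type*} [Group G] [Fintype G] [DecidableEq G]
    (D : Finset (G × G)) (φ : G ≃* G)
    (hfix : ∀ x : G, φ x = x → x = 1)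
    (a b : G)
    (hmult : D.image (fun p => (φ p.1, φ p.2)) = D.image fun p => (a * p.1, b * p.2)) :
    ∃ g h : G,
      (D.image fun p => (g * p.1, h * p.2)).image (fun p => (φ p.1, φ p.2)) =
        D.image fun p => (g * p.1, h * p.2) := by
  obtain ⟨g, hg⟩ := surj_aux φ hfix a
  obtain ⟨h, hh⟩ := surj_aux φ hfix b
  refine ⟨g, h, ?_⟩
  have hga : φ g * a = g := by rw [← hg]; group
  have hhb : φ h * b = h := by rw [← hh]; group
  rw [image_image]
  have step1 : ((fun p : G × G => (φ p.1, φ p.2)) ∘ fun p : G × G => (g * p.1, h * p.2))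
      = (fun p : G × G => (φ g * p.1, φ h * p.2)) ∘ fun p : G × G => (φ p.1, φ p.2) := by
    funext p; simp [Function.comp_def, map_mul, mul_assoc]
  rw [step1, ← image_image, hmult, image_image]
  congr 1
  funext p
  simp only [Function.comp]
  rw [← mul_assoc, ← mul_assoc, hga, hhb]
end

section
/- If A is the incidence matrix of a symmetric (v,k,λ) design and L is a Latin square of order v, then B(x,y,z) = A(x, L(y,z)) is a C³₃(v, v·k, v·λ)-cube. -/
open Finset

/-- An incidence matrix of a symmetric `(v,k,λ)` design: a `v×v` `{0,1}`-matrix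
with `k` ones in every row and column, such that any two distinct rows and any
two distinct columns have scalar product `lam`. -/
def IsIncidenceMatrix (v k lam : ℕ) (A : Fin v → Fin v → ℕ) : Prop :=
  (∀ i j, A i j ≤ 1) ∧
  (∀ i, ∑ j, A i j = k) ∧
  (∀ j, ∑ i, A i j = k) ∧
  (∀ i₁ i₂, i₁ ≠ i₂ → ∑ j, A i₁ j * A i₂ j = lam) ∧
  (∀ j₁ j₂, j₁ ≠ j₂ → ∑ i, A i j₁ * A i j₂ = lam)

/-- A Latin square of order : each symbol occurs exactly once in every row
and every column. -/
def IsLatinSquare (v : ℕ) (L : Fin v → Fin v → Fin v) : Prop :=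
  (∀ x, Function.Bijective (L x)) ∧ (∀ y, Function.Bijective (fun x => L x y))

theorem stmt16 (v k lam : ℕ) (A : Fin v → Fin v → ℕ)
    (hA : IsIncidenceMatrix v k lam A)
    (L : Fin v → Fin v → Fin v) (hL : IsLatinSquare v L) :
    IsCube v (v * k) (v * lam) (fun x y z => A x (L y z)) := by
  obtain ⟨h01, hrow, hcol, hrp, hcp⟩ := hA
  obtain ⟨hLr, hLc⟩ := hL
  refine ⟨fun x y z => h01 _ _, ?_, ?_, ?_, ?_, ?_, ?_⟩
  · intro x
    have : ∀ y : Fin v, ∑ z, A x (L y z) = k := fun y =>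
      (Fintype.sum_bijective (L y) (hLr y) _ _ (fun z => rfl)).trans (hrow x)
    simp [this, Finset.sum_const, mul_comm]
  · intro y
    have : ∀ x : Fin v, ∑ z, A x (L y z) = k := fun x =>
      (Fintype.sum_bijective (L y) (hLr y) _ _ (fun z => rfl)).trans (hrow x)
    simp [this, Finset.sum_const, mul_comm]
  · intro z
    have : ∀ x : Fin v, ∑ y, A x (L y z) = k := fun x =>
      (Fintype.sum_bijective (fun y => L y z) (hLc z) _ _ (fun y => rfl)).trans (hrow x)
    simp [this, Finset.sum_const, mul_comm]
  · intro x₁ x₂ hne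
    have : ∀ y : Fin v, ∑ z, A x₁ (L y z) * A x₂ (L y z) = lam := fun y =>
      (Fintype.sum_bijective (L y) (hLr y) _ _ (fun z => rfl)).trans (hrp x₁ x₂ hne)
    simp [this, Finset.sum_const, mul_comm]
  · intro y₁ y₂ hne
    rw [Finset.sum_comm]
    have : ∀ z : Fin v, ∑ x, A x (L y₁ z) * A x (L y₂ z) = lam := by
      intro z
      exact hcp _ _ (fun h => hne ((hLc z).1 h))
    simp [this, Finset.sum_const, mul_comm]
  · intro z₁ z₂ hne
    rw [Finset.sum_comm]
    have : ∀ y : Fin v, ∑ x, A x (L y z₁) * A x (L y z₂) = lam := by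
      intro y
      exact hcp _ _ (fun h => hne ((hLr y).1 h))
    simp [this, Finset.sum_const, mul_comm]
end

section
/- Let A be a 1-diagonal incidence matrix of a symmetric (v,k,λ) design (A(x,x)=1 for all x). Then B(x,y,z) = A(x,y)+A(y,z)+A(x,z) mod 2 is a C³₃(v, K, Λ)-cube with K = k(3v+4λ−2k) − 4vλ and Λ = k(v−4λ+2) + 2λ(2λ−1). -/
open Finset

private lemma aux_ite_sum (v : ℕ) (w : ℤ) (f : Fin v → ℤ) (x : Fin v) (k : ℕ)
    (hsum : ∑ y, f y = (v:ℤ) - 2*k) (hx : f x = -1) :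
    ∑ y, f y * (if y = x then (v:ℤ) else w) = ((v:ℤ)-2*k)*w - ((v:ℤ) - w) := by
  have h : ∀ y, f y * (if y = x then (v:ℤ) else w)
      = f y * w + (if y = x then f y * ((v:ℤ) - w) else 0) := by
    intro y; split_ifs <;> ring
  simp_rw [h]
  rw [Finset.sum_add_distrib, ← Finset.sum_mul, hsum, Finset.sum_ite_eq' univ x,
    if_pos (mem_univ x), hx]
  ring

theorem stmt18 (v k lam K Lam : ℕ) (A : Fin v → Fin v → ℕ)
    (hA : IsIncidenceMatrix v k lam A)
    (hdiag : ∀ x, A x x = 1)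
    (hK : (K : ℤ) = (k : ℤ) * (3 * v + 4 * lam - 2 * k) - 4 * v * lam)
    (hLam : (Lam : ℤ) = (k : ℤ) * ((v : ℤ) - 4 * lam + 2) + 2 * lam * (2 * lam - 1)) :
    IsCube v K Lam (fun x y z => (A x y + A y z + A x z) % 2) := by
  classical
  obtain ⟨h01, hrow, hcol, hrowP, hcolP⟩ := hA
  have h01' : ∀ i j, A i j = 0 ∨ A i j = 1 := fun i j =>
    Nat.le_one_iff_eq_zero_or_eq_one.mp (h01 i j)
  set E : Fin v → Fin v → ℤ := fun i j => 1 - 2 * (A i j : ℤ) with hEdef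
  set w : ℤ := (v:ℤ) - 4*k + 4*lam with hw
  set Tv : ℤ := ((v:ℤ)-2*k)*w - ((v:ℤ) - w) with hTv
  -- basic facts about E
  have hEsq : ∀ i j, E i j * E i j = 1 := by
    intro i j; rcases h01' i j with h | h <;> simp [hEdef, h]
  have hEdiag : ∀ i, E i i = -1 := by
    intro i; simp [hEdef, hdiag i]
  have castsum : ∀ (f : Fin v → ℕ) (c : ℕ), (∑ j, f j = c) → ∑ j, ((f j : ℤ)) = c := by
    intro f c h; rw [← Nat.cast_sum, h]
  have hErow : ∀ i, ∑ j, E i j = (v:ℤ) - 2*k := by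
    intro i
    have h := castsum (A i) k (hrow i)
    simp only [hEdef]
    rw [Finset.sum_sub_distrib, Finset.sum_const, Finset.card_univ, Fintype.card_fin,
      ← Finset.mul_sum, h]
    push_cast; ring
  have hEcol : ∀ j, ∑ i, E i j = (v:ℤ) - 2*k := by
    intro j
    have h := castsum (fun i => A i j) k (hcol j)
    simp only [hEdef]
    rw [Finset.sum_sub_distrib, Finset.sum_const, Finset.card_univ, Fintype.card_fin,
      ← Finset.mul_sum, h]
    push_cast; ring
  -- scalar products of rows/columns of E
  have hrowE : ∀ i₁ i₂, ∑ j, E i₁ j * E i₂ j = if i₁ = i₂ then (v:ℤ) else w := by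
    intro i₁ i₂
    by_cases h : i₁ = i₂
    · subst h
      simp [hEsq, Finset.card_univ]
    · rw [if_neg h]
      have hp := castsum (fun j => A i₁ j * A i₂ j) lam (hrowP i₁ i₂ h)
      have h1 := castsum (A i₁) k (hrow i₁)
      have h2 := castsum (A i₂) k (hrow i₂)
      have expand : ∀ j, E i₁ j * E i₂ j
          = 1 - 2*(A i₁ j:ℤ) - 2*(A i₂ j:ℤ) + 4*(((A i₁ j : ℕ) * A i₂ j : ℕ):ℤ) := by
        intro j; simp only [hEdef]; push_cast; ring
      simp_rw [expand]
      rw [Finset.sum_add_distrib, Finset.sum_sub_distrib, Finset.sum_sub_distrib,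
        Finset.sum_const, Finset.card_univ, Fintype.card_fin,
        ← Finset.mul_sum, ← Finset.mul_sum, ← Finset.mul_sum, h1, h2, hp, hw]
      push_cast; ring
  have hcolE : ∀ j₁ j₂, ∑ i, E i j₁ * E i j₂ = if j₁ = j₂ then (v:ℤ) else w := by
    intro j₁ j₂
    by_cases h : j₁ = j₂
    · subst h
      simp [hEsq, Finset.card_univ]
    · rw [if_neg h]
      have hp := castsum (fun i => A i j₁ * A i j₂) lam (hcolP j₁ j₂ h)
      have h1 := castsum (fun i => A i j₁) k (hcol j₁)
      have h2 := castsum (fun i => A i j₂) k (hcol j₂)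
      have expand : ∀ i, E i j₁ * E i j₂
          = 1 - 2*(A i j₁:ℤ) - 2*(A i j₂:ℤ) + 4*(((A i j₁ : ℕ) * A i j₂ : ℕ):ℤ) := by
        intro i; simp only [hEdef]; push_cast; ring
      simp_rw [expand]
      rw [Finset.sum_add_distrib, Finset.sum_sub_distrib, Finset.sum_sub_distrib,
        Finset.sum_const, Finset.card_univ, Fintype.card_fin,
        ← Finset.mul_sum, ← Finset.mul_sum, ← Finset.mul_sum, h1, h2, hp, hw]
      push_cast; ring
  -- triple sums
  have hTx : ∀ x, (∑ y, ∑ z, E x y * E y z * E x z) = Tv := by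
    intro x
    have h1 : ∀ y, ∑ z, E x y * E y z * E x z = E x y * (if y = x then (v:ℤ) else w) := by
      intro y
      simp_rw [mul_assoc]
      rw [← Finset.mul_sum, hrowE y x]
    simp_rw [h1]
    exact aux_ite_sum v w (E x) x k (hErow x) (hEdiag x)
  have hTy : ∀ y, (∑ x, ∑ z, E x y * E y z * E x z) = Tv := by
    intro y
    have h1 : ∀ x, ∑ z, E x y * E y z * E x z = E x y * (if x = y then (v:ℤ) else w) := by
      intro x
      have : ∀ z, E x y * E y z * E x z = E x y * (E x z * E y z) := fun z => by ring
      simp_rw [this]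
      rw [← Finset.mul_sum, hrowE x y]
    simp_rw [h1]
    exact aux_ite_sum v w (fun x => E x y) y k (hEcol y) (hEdiag y)
  have hTz : ∀ z, (∑ x, ∑ y, E x y * E y z * E x z) = Tv := by
    intro z
    rw [Finset.sum_comm]
    have h1 : ∀ y, ∑ x, E x y * E y z * E x z = E y z * (if y = z then (v:ℤ) else w) := by
      intro y
      have : ∀ x, E x y * E y z * E x z = E y z * (E x y * E x z) := fun x => by ring
      simp_rw [this]
      rw [← Finset.mul_sum, hcolE y z]
    simp_rw [h1]
    exact aux_ite_sum v w (fun y => E y z) z k (hEcol z) (hEdiag z)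
  -- the key cast lemma
  have key : ∀ x y z : Fin v,
      2 * (((A x y + A y z + A x z) % 2 : ℕ) : ℤ) = 1 - E x y * E y z * E x z := by
    intro x y z
    rcases h01' x y with h1 | h1 <;> rcases h01' y z with h2 | h2 <;>
      rcases h01' x z with h3 | h3 <;> simp [hEdef, h1, h2, h3] <;> norm_num
  -- design identity  k² = k + λ(v-1)
  have hk2 : v ≠ 0 → (k:ℤ)*k = k + lam * ((v:ℤ) - 1) := by
    intro hv
    obtain ⟨i₀⟩ : Nonempty (Fin v) := ⟨⟨0, Nat.pos_of_ne_zero hv⟩⟩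
    have e1 : ∑ i₂, ∑ j, A i₀ j * A i₂ j = k * k := by
      rw [Finset.sum_comm]
      have h1 : ∀ j, ∑ i₂, A i₀ j * A i₂ j = A i₀ j * k := by
        intro j; rw [← Finset.mul_sum, hcol j]
      simp_rw [h1]
      rw [← Finset.sum_mul, hrow i₀]
    have e2 : ∑ i₂, ∑ j, A i₀ j * A i₂ j = k + (v-1) * lam := by
      rw [← Finset.add_sum_erase _ _ (mem_univ i₀)]
      congr 1
      · have h1 : ∀ j, A i₀ j * A i₀ j = A i₀ j := by
          intro j; rcases h01' i₀ j with h | h <;> simp [h]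
        simp_rw [h1]; exact hrow i₀
      · rw [Finset.sum_congr rfl
          (fun i₂ hi₂ => hrowP i₀ i₂ (Ne.symm (Finset.ne_of_mem_erase hi₂)))]
        rw [Finset.sum_const, Finset.card_erase_of_mem (mem_univ i₀), Finset.card_univ,
          Fintype.card_fin, smul_eq_mul]
    have e3 : k * k = k + (v-1) * lam := e1.symm.trans e2
    have hv1 : 1 ≤ v := Nat.one_le_iff_ne_zero.mpr hv
    have := congrArg (Nat.cast : ℕ → ℤ) e3
    push_cast [Nat.cast_sub hv1] at this
    linarith [this]
  have hrw : ∀ i₁ i₂, i₁ ≠ i₂ → ∑ j, E i₁ j * E i₂ j = w := fun i₁ i₂ h => by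
    rw [hrowE, if_neg h]
  have hcw : ∀ j₁ j₂, j₁ ≠ j₂ → ∑ i, E i j₁ * E i j₂ = w := fun j₁ j₂ h => by
    rw [hcolE, if_neg h]
  have h2K : v ≠ 0 → 2*(K:ℤ) = (v:ℤ)^2 - Tv := by
    intro hv
    have hkk := hk2 hv
    rw [hK, hTv, hw]
    linear_combination 4*hkk
  have h4L : 4*(Lam:ℤ) = (v:ℤ)^2 - Tv - Tv + w*w := by
    rw [hLam, hTv, hw]; ring
  refine ⟨?_, ?_, ?_, ?_, ?_, ?_, ?_⟩
  · intro x y z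
    show (A x y + A y z + A x z) % 2 ≤ 1
    omega
  · -- layer sums, direction x
    intro x
    have h2S : 2 * ∑ y, ∑ z, (((A x y + A y z + A x z) % 2 : ℕ) : ℤ) = (v:ℤ)^2 - Tv := by
      rw [Finset.mul_sum]
      simp_rw [Finset.mul_sum, key]
      simp only [Finset.sum_sub_distrib, Finset.sum_const, Finset.card_univ,
        Fintype.card_fin, smul_eq_mul, nsmul_eq_mul, mul_one]
      rw [hTx x]; ring
    have hfin : (((∑ y, ∑ z, (A x y + A y z + A x z) % 2 : ℕ)) : ℤ) = (K:ℤ) := by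
      rw [Nat.cast_sum]
      simp_rw [Nat.cast_sum]
      have := h2K x.pos.ne'
      linarith
    exact_mod_cast hfin
  · -- direction y
    intro y
    have h2S : 2 * ∑ x, ∑ z, (((A x y + A y z + A x z) % 2 : ℕ) : ℤ) = (v:ℤ)^2 - Tv := by
      rw [Finset.mul_sum]
      simp_rw [Finset.mul_sum, key]
      simp only [Finset.sum_sub_distrib, Finset.sum_const, Finset.card_univ,
        Fintype.card_fin, smul_eq_mul, nsmul_eq_mul, mul_one]
      rw [hTy y]; ring
    have hfin : (((∑ x, ∑ z, (A x y + A y z + A x z) % 2 : ℕ)) : ℤ) = (K:ℤ) := by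
      rw [Nat.cast_sum]
      simp_rw [Nat.cast_sum]
      have := h2K y.pos.ne'
      linarith
    exact_mod_cast hfin
  · -- direction z
    intro z
    have h2S : 2 * ∑ x, ∑ y, (((A x y + A y z + A x z) % 2 : ℕ) : ℤ) = (v:ℤ)^2 - Tv := by
      rw [Finset.mul_sum]
      simp_rw [Finset.mul_sum, key]
      simp only [Finset.sum_sub_distrib, Finset.sum_const, Finset.card_univ,
        Fintype.card_fin, smul_eq_mul, nsmul_eq_mul, mul_one]
      rw [hTz z]; ring
    have hfin : (((∑ x, ∑ y, (A x y + A y z + A x z) % 2 : ℕ)) : ℤ) = (K:ℤ) := by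
      rw [Nat.cast_sum]
      simp_rw [Nat.cast_sum]
      have := h2K z.pos.ne'
      linarith
    exact_mod_cast hfin
  · -- scalar products, direction x
    intro x₁ x₂ hne
    have hprod : ∀ y z, 4 * ((((A x₁ y + A y z + A x₁ z) % 2) * ((A x₂ y + A y z + A x₂ z) % 2) : ℕ) : ℤ)
        = 1 - E x₁ y * E y z * E x₁ z - E x₂ y * E y z * E x₂ z
          + (E x₁ y * E x₂ y) * (E x₁ z * E x₂ z) := by
      intro y z
      have k1 := key x₁ y z
      have k2 := key x₂ y z
      have hs := hEsq y z
      rw [Nat.cast_mul]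
      linear_combination ((1:ℤ) - E x₂ y * E y z * E x₂ z) * k1
        + (2 * (((A x₁ y + A y z + A x₁ z) % 2 : ℕ) : ℤ)) * k2
        + (E x₁ y * E x₂ y * (E x₁ z * E x₂ z)) * hs
    have h4S : 4 * ∑ y, ∑ z, ((((A x₁ y + A y z + A x₁ z) % 2) * ((A x₂ y + A y z + A x₂ z) % 2) : ℕ) : ℤ)
        = (v:ℤ)^2 - Tv - Tv + w*w := by
      rw [Finset.mul_sum]
      simp_rw [Finset.mul_sum, hprod]
      simp only [Finset.sum_add_distrib, Finset.sum_sub_distrib, Finset.sum_const,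
        Finset.card_univ, Fintype.card_fin, smul_eq_mul, nsmul_eq_mul, mul_one]
      rw [hTx x₁, hTx x₂, ← Finset.sum_mul_sum, hrw x₁ x₂ hne]
      push_cast; ring
    have hfin : (((∑ y, ∑ z, ((A x₁ y + A y z + A x₁ z) % 2) * ((A x₂ y + A y z + A x₂ z) % 2) : ℕ)) : ℤ) = (Lam:ℤ) := by
      rw [Nat.cast_sum]
      simp_rw [Nat.cast_sum]
      linarith
    exact_mod_cast hfin
  · -- direction y
    intro y₁ y₂ hne
    have hprod : ∀ x z, 4 * ((((A x y₁ + A y₁ z + A x z) % 2) * ((A x y₂ + A y₂ z + A x z) % 2) : ℕ) : ℤ)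
        = 1 - E x y₁ * E y₁ z * E x z - E x y₂ * E y₂ z * E x z
          + (E x y₁ * E x y₂) * (E y₁ z * E y₂ z) := by
      intro x z
      have k1 := key x y₁ z
      have k2 := key x y₂ z
      have hs := hEsq x z
      rw [Nat.cast_mul]
      linear_combination ((1:ℤ) - E x y₂ * E y₂ z * E x z) * k1
        + (2 * (((A x y₁ + A y₁ z + A x z) % 2 : ℕ) : ℤ)) * k2
        + (E x y₁ * E x y₂ * (E y₁ z * E y₂ z)) * hs
    have h4S : 4 * ∑ x, ∑ z, ((((A x y₁ + A y₁ z + A x z) % 2) * ((A x y₂ + A y₂ z + A x z) % 2) : ℕ) : ℤ)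
        = (v:ℤ)^2 - Tv - Tv + w*w := by
      rw [Finset.mul_sum]
      simp_rw [Finset.mul_sum, hprod]
      simp only [Finset.sum_add_distrib, Finset.sum_sub_distrib, Finset.sum_const,
        Finset.card_univ, Fintype.card_fin, smul_eq_mul, nsmul_eq_mul, mul_one]
      rw [hTy y₁, hTy y₂, ← Finset.sum_mul_sum, hcw y₁ y₂ hne, hrw y₁ y₂ hne]
      push_cast; ring
    have hfin : (((∑ x, ∑ z, ((A x y₁ + A y₁ z + A x z) % 2) * ((A x y₂ + A y₂ z + A x z) % 2) : ℕ)) : ℤ) = (Lam:ℤ) := by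
      rw [Nat.cast_sum]
      simp_rw [Nat.cast_sum]
      linarith
    exact_mod_cast hfin
  · -- direction z
    intro z₁ z₂ hne
    have hprod : ∀ x y, 4 * ((((A x y + A y z₁ + A x z₁) % 2) * ((A x y + A y z₂ + A x z₂) % 2) : ℕ) : ℤ)
        = 1 - E x y * E y z₁ * E x z₁ - E x y * E y z₂ * E x z₂
          + (E x z₁ * E x z₂) * (E y z₁ * E y z₂) := by
      intro x y
      have k1 := key x y z₁
      have k2 := key x y z₂
      have hs := hEsq x y
      rw [Nat.cast_mul]
      linear_combination ((1:ℤ) - E x y * E y z₂ * E x z₂) * k1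
        + (2 * (((A x y + A y z₁ + A x z₁) % 2 : ℕ) : ℤ)) * k2
        + (E x z₁ * E x z₂ * (E y z₁ * E y z₂)) * hs
    have h4S : 4 * ∑ x, ∑ y, ((((A x y + A y z₁ + A x z₁) % 2) * ((A x y + A y z₂ + A x z₂) % 2) : ℕ) : ℤ)
        = (v:ℤ)^2 - Tv - Tv + w*w := by
      rw [Finset.mul_sum]
      simp_rw [Finset.mul_sum, hprod]
      simp only [Finset.sum_add_distrib, Finset.sum_sub_distrib, Finset.sum_const,
        Finset.card_univ, Fintype.card_fin, smul_eq_mul, nsmul_eq_mul, mul_one]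
      rw [hTz z₁, hTz z₂, ← Finset.sum_mul_sum, hcw z₁ z₂ hne]
      push_cast; ring
    have hfin : (((∑ x, ∑ y, ((A x y + A y z₁ + A x z₁) % 2) * ((A x y + A y z₂ + A x z₂) % 2) : ℕ)) : ℤ) = (Lam:ℤ) := by
      rw [Nat.cast_sum]
      simp_rw [Nat.cast_sum]
      linarith
    exact_mod_cast hfin
end

section
/- Let A₀ be the incidence matrix of a doubly regular tournament of order 4t−1 (a symmetric (4t−1,2t−1,t−1) design with A₀ + A₀ᵀ = J − I). Then B(x,y,z) = A₀(x,y)+A₀(y,z)+A₀(z,x) mod 2 is a C³₃(4t−1, (2t−1)(4t+3), (2t−1)(2t+3))-cube. -/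
open Finset

theorem stmt19 (t : ℕ) (ht : 0 < t) (A : Fin (4 * t - 1) → Fin (4 * t - 1) → ℕ)
    (hA : IsIncidenceMatrix (4 * t - 1) (2 * t - 1) (t - 1) A)
    (hskew : ∀ x y, A x y + A y x = if x = y then 0 else 1) :
    IsCube (4 * t - 1) ((2 * t - 1) * (4 * t + 3)) ((2 * t - 1) * (2 * t + 3))
      (fun x y z => (A x y + A y z + A z x) % 2) := by
  obtain ⟨h01, hrow, hcol, hrowIP, hcolIP⟩ := hA
  have hA01 : ∀ x y, A x y = 0 ∨ A x y = 1 := fun x y => by have := h01 x y; omega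
  have hdiag : ∀ x, A x x = 0 := fun x => by
    have := hskew x x; simp at this; omega
  have hn : ((4*t-1 : ℕ) : ℤ) = 4*(t:ℤ)-1 := by omega
  have hk : ((2*t-1 : ℕ) : ℤ) = 2*(t:ℤ)-1 := by omega
  have hl : ((t-1 : ℕ) : ℤ) = (t:ℤ)-1 := by omega
  set s : Fin (4*t-1) → Fin (4*t-1) → ℤ := fun x y => 1 - 2 * A x y with hs
  have hsq : ∀ x y, s x y * s x y = 1 := by
    intro x y; rcases hA01 x y with h | h <;> simp [hs, h]
  have hsd : ∀ x, s x x = 1 := fun x => by simp [hs, hdiag x]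
  have hski : ∀ x y, s y x = (if x = y then 2 else 0) - s x y := by
    intro x y
    rcases eq_or_ne x y with rfl | hne
    · simp [hsd]
    · have h := hskew x y
      rw [if_neg hne] at h
      have h' : (A x y : ℤ) + (A y x : ℤ) = 1 := by exact_mod_cast h
      simp only [hs, if_neg hne]
      linarith
  have hrowZ : ∀ x, ∑ y, (A x y : ℤ) = 2*(t:ℤ)-1 := by
    intro x; rw [← hk]; exact_mod_cast hrow x
  have hcolZ : ∀ y, ∑ x, (A x y : ℤ) = 2*(t:ℤ)-1 := by
    intro y; rw [← hk]; exact_mod_cast hcol y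
  have hrowIPZ : ∀ x₁ x₂, x₁ ≠ x₂ → ∑ y, (A x₁ y : ℤ) * (A x₂ y : ℤ) = (t:ℤ)-1 := by
    intro x₁ x₂ h; rw [← hl]; exact_mod_cast hrowIP x₁ x₂ h
  have hcolIPZ : ∀ y₁ y₂, y₁ ≠ y₂ → ∑ x, (A x y₁ : ℤ) * (A x y₂ : ℤ) = (t:ℤ)-1 := by
    intro y₁ y₂ h; rw [← hl]; exact_mod_cast hcolIP y₁ y₂ h
  have sum_one1 : ∑ _y : Fin (4*t-1), (1:ℤ) = 4*(t:ℤ)-1 := by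
    rw [Finset.sum_const, Finset.card_univ, Fintype.card_fin, nsmul_eq_mul, mul_one, hn]
  have Srow : ∀ x, ∑ y, s x y = 1 := by
    intro x
    have e : ∀ y, s x y = 1 - 2 * (A x y : ℤ) := fun y => rfl
    rw [Finset.sum_congr rfl fun y _ => e y, Finset.sum_sub_distrib, ← Finset.mul_sum,
      hrowZ, sum_one1]
    ring
  have Scol : ∀ y, ∑ x, s x y = 1 := by
    intro y
    have e : ∀ x, s x y = 1 - 2 * (A x y : ℤ) := fun x => rfl
    rw [Finset.sum_congr rfl fun x _ => e x, Finset.sum_sub_distrib, ← Finset.mul_sum,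
      hcolZ, sum_one1]
    ring
  have SrowIP : ∀ x₁ x₂, ∑ y, s x₁ y * s x₂ y = if x₁ = x₂ then 4*(t:ℤ)-1 else -1 := by
    intro x₁ x₂
    rcases eq_or_ne x₁ x₂ with rfl | hne
    · rw [if_pos rfl, Finset.sum_congr rfl fun y _ => hsq x₁ y, sum_one1]
    · rw [if_neg hne]
      have e : ∀ y, s x₁ y * s x₂ y =
          1 - 2*(A x₁ y:ℤ) - 2*(A x₂ y:ℤ) + 4*((A x₁ y:ℤ)*(A x₂ y:ℤ)) := by
        intro y; simp only [hs]; ring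
      rw [Finset.sum_congr rfl fun y _ => e y, Finset.sum_add_distrib,
        Finset.sum_sub_distrib, Finset.sum_sub_distrib, ← Finset.mul_sum, ← Finset.mul_sum,
        ← Finset.mul_sum, hrowZ, hrowZ, hrowIPZ _ _ hne, sum_one1]
      ring
  have ScolIP : ∀ y₁ y₂, ∑ x, s x y₁ * s x y₂ = if y₁ = y₂ then 4*(t:ℤ)-1 else -1 := by
    intro y₁ y₂
    rcases eq_or_ne y₁ y₂ with rfl | hne
    · rw [if_pos rfl, Finset.sum_congr rfl fun x _ => hsq x y₁, sum_one1]
    · rw [if_neg hne]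
      have e : ∀ x, s x y₁ * s x y₂ =
          1 - 2*(A x y₁:ℤ) - 2*(A x y₂:ℤ) + 4*((A x y₁:ℤ)*(A x y₂:ℤ)) := by
        intro x; simp only [hs]; ring
      rw [Finset.sum_congr rfl fun x _ => e x, Finset.sum_add_distrib,
        Finset.sum_sub_distrib, Finset.sum_sub_distrib, ← Finset.mul_sum, ← Finset.mul_sum,
        ← Finset.mul_sum, hcolZ, hcolZ, hcolIPZ _ _ hne, sum_one1]
      ring
  -- inner product of row y of S with column x of S
  have inner : ∀ y x, ∑ z, s y z * s z x = 2 * s y x + 1 - (if y = x then 4*(t:ℤ) else 0) := by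
    intro y x
    have step : ∀ z, s y z * s z x = (if x = z then 2 * s y z else 0) - s y z * s x z := by
      intro z
      rw [hski x z]; split_ifs <;> ring
    rw [Finset.sum_congr rfl fun z _ => step z, Finset.sum_sub_distrib, SrowIP y x,
      Finset.sum_ite_eq]
    simp only [Finset.mem_univ, if_true]
    rcases eq_or_ne y x with rfl | hne
    · rw [if_pos rfl, if_pos rfl, hsd]; ring
    · rw [if_neg hne, if_neg hne]; ring
  have triple : ∀ x, ∑ y, ∑ z, s x y * s y z * s z x = 7 - 12*(t:ℤ) := by
    intro x
    have e1 : ∀ y, ∑ z, s x y * s y z * s z x =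
        2*(s x y * s y x) + s x y - (if y = x then 4*(t:ℤ) * s x y else 0) := by
      intro y
      have e : ∑ z, s x y * s y z * s z x = s x y * ∑ z, s y z * s z x := by
        rw [Finset.mul_sum]; exact Finset.sum_congr rfl fun z _ => by ring
      rw [e, inner y x]; split_ifs <;> ring
    rw [Finset.sum_congr rfl fun y _ => e1 y, Finset.sum_sub_distrib, Finset.sum_add_distrib]
    have e2 : ∑ y, 2*(s x y * s y x) = 2 * (3 - 4*(t:ℤ)) := by
      have e : ∀ y, 2*(s x y * s y x) = 2*((if x = y then 2 * s x y else 0) - 1) := by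
        intro y
        rw [hski x y]
        split_ifs
        · linear_combination (-2 : ℤ) * hsq x y
        · linear_combination (-2 : ℤ) * hsq x y
      rw [Finset.sum_congr rfl fun y _ => e y, ← Finset.mul_sum, Finset.sum_sub_distrib,
        Finset.sum_ite_eq, sum_one1]
      simp only [Finset.mem_univ, if_true, hsd]
      ring
    have e3 : ∑ y, (if y = x then 4*(t:ℤ) * s x y else 0) = 4*(t:ℤ) := by
      rw [Finset.sum_ite_eq']
      simp [hsd]
    rw [e2, Srow x, e3]
    ring
  have triple2 : ∀ y, ∑ x, ∑ z, s x y * s y z * s z x = 7 - 12*(t:ℤ) := by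
    intro y
    rw [Finset.sum_comm, ← triple y]
    exact Finset.sum_congr rfl fun z _ => Finset.sum_congr rfl fun x _ => by ring
  have triple3 : ∀ z, ∑ x, ∑ y, s x y * s y z * s z x = 7 - 12*(t:ℤ) := by
    intro z
    rw [← triple z]
    exact Finset.sum_congr rfl fun x _ => Finset.sum_congr rfl fun y _ => by ring
  have cross1 : ∀ x₁ x₂, x₁ ≠ x₂ →
      ∑ y, ∑ z, (s x₁ y * s y z * s z x₁) * (s x₂ y * s y z * s z x₂) = 1 := by
    intro x₁ x₂ hne
    have e1 : ∀ y, ∑ z, (s x₁ y * s y z * s z x₁) * (s x₂ y * s y z * s z x₂) =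
        (s x₁ y * s x₂ y) * (-1) := by
      intro y
      have e : ∀ z, (s x₁ y * s y z * s z x₁) * (s x₂ y * s y z * s z x₂) =
          (s x₁ y * s x₂ y) * ((s y z * s y z) * (s z x₁ * s z x₂)) := fun z => by ring
      rw [Finset.sum_congr rfl fun z _ => e z]
      simp only [hsq, one_mul]
      rw [← Finset.mul_sum, ScolIP x₁ x₂, if_neg hne]
    rw [Finset.sum_congr rfl fun y _ => e1 y, ← Finset.sum_mul, SrowIP x₁ x₂, if_neg hne]
    ring
  have cross2 : ∀ y₁ y₂, y₁ ≠ y₂ →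
      ∑ x, ∑ z, (s x y₁ * s y₁ z * s z x) * (s x y₂ * s y₂ z * s z x) = 1 := by
    intro y₁ y₂ hne
    have e1 : ∀ x, ∑ z, (s x y₁ * s y₁ z * s z x) * (s x y₂ * s y₂ z * s z x) =
        (s x y₁ * s x y₂) * (-1) := by
      intro x
      have e : ∀ z, (s x y₁ * s y₁ z * s z x) * (s x y₂ * s y₂ z * s z x) =
          (s x y₁ * s x y₂) * ((s z x * s z x) * (s y₁ z * s y₂ z)) := fun z => by ring
      rw [Finset.sum_congr rfl fun z _ => e z]
      simp only [hsq, one_mul]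
      rw [← Finset.mul_sum, SrowIP y₁ y₂, if_neg hne]
    rw [Finset.sum_congr rfl fun x _ => e1 x, ← Finset.sum_mul, ScolIP y₁ y₂, if_neg hne]
    ring
  have cross3 : ∀ z₁ z₂, z₁ ≠ z₂ →
      ∑ x, ∑ y, (s x y * s y z₁ * s z₁ x) * (s x y * s y z₂ * s z₂ x) = 1 := by
    intro z₁ z₂ hne
    have e1 : ∀ x, ∑ y, (s x y * s y z₁ * s z₁ x) * (s x y * s y z₂ * s z₂ x) =
        (s z₁ x * s z₂ x) * (-1) := by
      intro x
      have e : ∀ y, (s x y * s y z₁ * s z₁ x) * (s x y * s y z₂ * s z₂ x) =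
          (s z₁ x * s z₂ x) * ((s x y * s x y) * (s y z₁ * s y z₂)) := fun y => by ring
      rw [Finset.sum_congr rfl fun y _ => e y]
      simp only [hsq, one_mul]
      rw [← Finset.mul_sum, ScolIP z₁ z₂, if_neg hne]
    rw [Finset.sum_congr rfl fun x _ => e1 x, ← Finset.sum_mul, SrowIP z₁ z₂, if_neg hne]
    ring
  have hB2 : ∀ x y z, 2 * (((A x y + A y z + A z x) % 2 : ℕ) : ℤ) =
      1 - s x y * s y z * s z x := by
    intro x y z
    rcases hA01 x y with h1 | h1 <;> rcases hA01 y z with h2 | h2 <;>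
      rcases hA01 z x with h3 | h3 <;> simp [hs, h1, h2, h3]
  have hKcast : (((2*t-1)*(4*t+3) : ℕ) : ℤ) = (2*(t:ℤ)-1)*(4*(t:ℤ)+3) := by
    rw [Nat.cast_mul, hk]; push_cast; ring
  have hLcast : (((2*t-1)*(2*t+3) : ℕ) : ℤ) = (2*(t:ℤ)-1)*(2*(t:ℤ)+3) := by
    rw [Nat.cast_mul, hk]; push_cast; ring
  have sum_one : ∑ _y : Fin (4*t-1), ∑ _z : Fin (4*t-1), (1:ℤ) =
      (4*(t:ℤ)-1)*(4*(t:ℤ)-1) := by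
    rw [Finset.sum_congr rfl fun y _ => sum_one1, Finset.sum_const, Finset.card_univ,
      Fintype.card_fin, nsmul_eq_mul, hn]
  have layer : ∀ (g : Fin (4*t-1) → Fin (4*t-1) → ℕ) (p : Fin (4*t-1) → Fin (4*t-1) → ℤ),
      (∀ y z, 2 * ((g y z : ℤ)) = 1 - p y z) →
      (∑ y, ∑ z, p y z = 7 - 12*(t:ℤ)) →
      (∑ y, ∑ z, g y z = (2*t-1)*(4*t+3)) := by
    intro g p hg hp
    have key : ((∑ y, ∑ z, g y z : ℕ) : ℤ) = (((2*t-1)*(4*t+3) : ℕ) : ℤ) := by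
      have lcast : ((∑ y, ∑ z, g y z : ℕ) : ℤ) = ∑ y, ∑ z, (g y z : ℤ) := by
        push_cast; rfl
      rw [lcast, hKcast]
      have h2 : (2:ℤ) * (∑ y, ∑ z, (g y z : ℤ)) = 2 * ((2*(t:ℤ)-1)*(4*(t:ℤ)+3)) := by
        calc (2:ℤ) * (∑ y, ∑ z, (g y z : ℤ))
            = ∑ y, ∑ z, ((1:ℤ) - p y z) := by
              rw [Finset.mul_sum]
              exact Finset.sum_congr rfl fun y _ => by
                rw [Finset.mul_sum]; exact Finset.sum_congr rfl fun z _ => hg y z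
          _ = (∑ _y : Fin (4*t-1), ∑ _z : Fin (4*t-1), (1:ℤ)) - ∑ y, ∑ z, p y z := by
              simp only [Finset.sum_sub_distrib]
          _ = (4*(t:ℤ)-1)*(4*(t:ℤ)-1) - (7 - 12*(t:ℤ)) := by rw [sum_one, hp]
          _ = 2 * ((2*(t:ℤ)-1)*(4*(t:ℤ)+3)) := by ring
      exact mul_left_cancel₀ two_ne_zero h2
    exact_mod_cast key
  have cross : ∀ (g₁ g₂ : Fin (4*t-1) → Fin (4*t-1) → ℕ)
      (p₁ p₂ : Fin (4*t-1) → Fin (4*t-1) → ℤ),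
      (∀ y z, 2 * ((g₁ y z : ℤ)) = 1 - p₁ y z) →
      (∀ y z, 2 * ((g₂ y z : ℤ)) = 1 - p₂ y z) →
      (∑ y, ∑ z, p₁ y z = 7 - 12*(t:ℤ)) →
      (∑ y, ∑ z, p₂ y z = 7 - 12*(t:ℤ)) →
      (∑ y, ∑ z, p₁ y z * p₂ y z = 1) →
      (∑ y, ∑ z, g₁ y z * g₂ y z = (2*t-1)*(2*t+3)) := by
    intro g₁ g₂ p₁ p₂ hg₁ hg₂ hp₁ hp₂ hpp
    have key : ((∑ y, ∑ z, g₁ y z * g₂ y z : ℕ) : ℤ) = (((2*t-1)*(2*t+3) : ℕ) : ℤ) := by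
      have lcast : ((∑ y, ∑ z, g₁ y z * g₂ y z : ℕ) : ℤ) =
          ∑ y, ∑ z, ((g₁ y z : ℤ) * (g₂ y z : ℤ)) := by push_cast; rfl
      rw [lcast, hLcast]
      have h4 : (4:ℤ) * (∑ y, ∑ z, ((g₁ y z : ℤ) * (g₂ y z : ℤ))) =
          4 * ((2*(t:ℤ)-1)*(2*(t:ℤ)+3)) := by
        calc (4:ℤ) * (∑ y, ∑ z, ((g₁ y z : ℤ) * (g₂ y z : ℤ)))
            = ∑ y, ∑ z, ((1:ℤ) - p₁ y z - p₂ y z + p₁ y z * p₂ y z) := by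
              rw [Finset.mul_sum]
              refine Finset.sum_congr rfl fun y _ => ?_
              rw [Finset.mul_sum]
              refine Finset.sum_congr rfl fun z _ => ?_
              have : (4:ℤ) * ((g₁ y z : ℤ) * (g₂ y z : ℤ)) =
                  (2 * (g₁ y z : ℤ)) * (2 * (g₂ y z : ℤ)) := by ring
              rw [this, hg₁ y z, hg₂ y z]
              ring
          _ = ((∑ _y : Fin (4*t-1), ∑ _z : Fin (4*t-1), (1:ℤ)) - ∑ y, ∑ z, p₁ y z
                - ∑ y, ∑ z, p₂ y z) + ∑ y, ∑ z, p₁ y z * p₂ y z := by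
              simp only [Finset.sum_add_distrib, Finset.sum_sub_distrib]
          _ = (((4*(t:ℤ)-1)*(4*(t:ℤ)-1) - (7 - 12*(t:ℤ))) - (7 - 12*(t:ℤ))) + 1 := by
              rw [sum_one, hp₁, hp₂, hpp]
          _ = 4 * ((2*(t:ℤ)-1)*(2*(t:ℤ)+3)) := by ring
      exact mul_left_cancel₀ (by norm_num : (4:ℤ) ≠ 0) h4
    exact_mod_cast key
  refine ⟨fun x y z => ?_, fun x => ?_, fun y => ?_, fun z => ?_,
    fun x₁ x₂ hne => ?_, fun y₁ y₂ hne => ?_, fun z₁ z₂ hne => ?_⟩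
  · show (A x y + A y z + A z x) % 2 ≤ 1
    omega
  · exact layer (fun y z => (A x y + A y z + A z x) % 2)
      (fun y z => s x y * s y z * s z x) (fun y z => hB2 x y z) (triple x)
  · exact layer (fun x z => (A x y + A y z + A z x) % 2)
      (fun x z => s x y * s y z * s z x) (fun x z => hB2 x y z) (triple2 y)
  · exact layer (fun x y => (A x y + A y z + A z x) % 2)
      (fun x y => s x y * s y z * s z x) (fun x y => hB2 x y z) (triple3 z)
  · exact cross (fun y z => (A x₁ y + A y z + A z x₁) % 2)
      (fun y z => (A x₂ y + A y z + A z x₂) % 2)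
      (fun y z => s x₁ y * s y z * s z x₁) (fun y z => s x₂ y * s y z * s z x₂)
      (fun y z => hB2 x₁ y z) (fun y z => hB2 x₂ y z) (triple x₁) (triple x₂)
      (cross1 x₁ x₂ hne)
  · exact cross (fun x z => (A x y₁ + A y₁ z + A z x) % 2)
      (fun x z => (A x y₂ + A y₂ z + A z x) % 2)
      (fun x z => s x y₁ * s y₁ z * s z x) (fun x z => s x y₂ * s y₂ z * s z x)
      (fun x z => hB2 x y₁ z) (fun x z => hB2 x y₂ z) (triple2 y₁) (triple2 y₂)
      (cross2 y₁ y₂ hne)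
  · exact cross (fun x y => (A x y + A y z₁ + A z₁ x) % 2)
      (fun x y => (A x y + A y z₂ + A z₂ x) % 2)
      (fun x y => s x y * s y z₁ * s z₁ x) (fun x y => s x y * s y z₂ * s z₂ x)
      (fun x y => hB2 x y z₁) (fun x y => hB2 x y z₂) (triple3 z₁) (triple3 z₂)
      (cross3 z₁ z₂ hne)
end
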